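/- arXiv:2104.03454 — 4 statements merged into one kernel-verified Lean document; each statement's English description precedes it below -/
import Mathlib

section
/- Let G=(V,E) be a finite directed graph with incidence matrix A ∈ {-1,0,1}^{n×r} (column k has -1 at the source of edge k, +1 at the target, 0 elsewhere; for self-loops the column is zero). If G is weakly reversible (every edge lies on a directed cycle), then there exists a matrix B ∈ ℝ^{n×r} structurally equivalent to A (i.e., for all i,j: A_{i,j} < 0 ⟺ B_{i,j} < 0, A_{i,j} = 0 ⟺ B_{i,j} = 0, and A_{i,j} > 0 ⟺ B_{i,j} > 0) such that B·𝟙 = 0, where 𝟙 = (1,…,1) ∈ ℝ^r. -/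
/-- From a path `a ⟶* b` extract a nonnegative edge flow whose divergence is
`δ_a - δ_b`. -/
lemma path_flow {V E : Type*} [Fintype E] [DecidableEq V] [DecidableEq E]
    (src tgt : E → V) {a b : V}
    (h : Relation.ReflTransGen (fun a b => ∃ e', src e' = a ∧ tgt e' = b) a b) :
    ∃ f : E → ℝ, (∀ k, 0 ≤ f k) ∧
      ∀ v, (∑ k, f k * ((if src k = v then (1:ℝ) else 0) -
          (if tgt k = v then 1 else 0)))
        = (if a = v then 1 else 0) - (if b = v then 1 else 0) := by
  induction h with
  | refl => exact ⟨0, fun k => le_refl 0, by simp⟩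
  | @tail b c hab hbc ih =>
    obtain ⟨f, hf0, hf⟩ := ih
    obtain ⟨e', he1, he2⟩ := hbc
    refine ⟨f + fun k => if k = e' then 1 else 0, ?_, ?_⟩
    · intro k
      by_cases hk : k = e' <;> simp [hk] <;> linarith [hf0 k, hf0 e']
    · intro v
      have hsum : (∑ k, (if k = e' then (1:ℝ) else 0) *
          ((if src k = v then (1:ℝ) else 0) - (if tgt k = v then 1 else 0)))
          = ((if src e' = v then (1:ℝ) else 0) - (if tgt e' = v then 1 else 0)) := by
        rw [Finset.sum_eq_single e']
        · simp
        · intro k _ hk; simp [hk]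
        · intro hk; exact absurd (Finset.mem_univ e') hk
      simp only [Pi.add_apply, add_mul, Finset.sum_add_distrib, hf v, hsum,
        he1, he2]
      by_cases h1 : a = v <;> by_cases h2 : b = v <;> by_cases h3 : c = v <;>
        simp [h1, h2, h3]

/-- If every edge of a finite directed multigraph lies on a directed
cycle (weak reversibility), then there is a matrix `B` structurally equivalent to
the incidence matrix `A` with `B · 𝟙 = 0`. -/
theorem stmt_0 {V E : Type*} [Fintype V] [Fintype E] [DecidableEq V]
    (src tgt : E → V) (A : Matrix V E ℝ)
    (hA : ∀ j k, A j k = (if tgt k = j then (1 : ℝ) else 0) -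
      (if src k = j then (1 : ℝ) else 0))
    (hwr : ∀ e : E, Relation.ReflTransGen
      (fun a b => ∃ e', src e' = a ∧ tgt e' = b) (tgt e) (src e)) :
    ∃ B : Matrix V E ℝ,
      (∀ i j, (A i j < 0 ↔ B i j < 0) ∧ (A i j = 0 ↔ B i j = 0) ∧
        (0 < A i j ↔ 0 < B i j)) ∧
      B.mulVec (fun _ => (1 : ℝ)) = 0 := by
  classical
  -- for each edge e, a flow from tgt e to src e
  choose f hf0 hfdiv using fun e => path_flow src tgt (hwr e)
  -- total circulation weight
  set w : E → ℝ := fun k => ∑ e, ((if k = e then (1:ℝ) else 0) + f e k) with hw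
  have hwpos : ∀ k, 0 < w k := by
    intro k
    apply Finset.sum_pos'
    · intro e _
      by_cases hk : k = e <;> simp [hk] <;> linarith [hf0 e k, hf0 e e]
    · exact ⟨k, Finset.mem_univ k, by simp; linarith [hf0 k k]⟩
  -- divergence of w is zero
  have hdiv : ∀ v, (∑ k, w k * ((if src k = v then (1:ℝ) else 0) -
      (if tgt k = v then 1 else 0))) = 0 := by
    intro v
    have : (∑ k, w k * ((if src k = v then (1:ℝ) else 0) -
        (if tgt k = v then 1 else 0)))
        = ∑ e, ∑ k, ((if k = e then (1:ℝ) else 0) + f e k) *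
          ((if src k = v then (1:ℝ) else 0) - (if tgt k = v then 1 else 0)) := by
      rw [Finset.sum_comm]
      apply Finset.sum_congr rfl
      intro k _
      rw [hw, Finset.sum_mul]
    rw [this]
    apply Finset.sum_eq_zero
    intro e _
    have hsingle : (∑ k, (if k = e then (1:ℝ) else 0) *
        ((if src k = v then (1:ℝ) else 0) - (if tgt k = v then 1 else 0)))
        = ((if src e = v then (1:ℝ) else 0) - (if tgt e = v then 1 else 0)) := by
      rw [Finset.sum_eq_single e]
      · simp
      · intro k _ hk; simp [hk]
      · intro hk; exact absurd (Finset.mem_univ e) hk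
    simp only [add_mul, Finset.sum_add_distrib, hsingle, hfdiv e v]
    ring
  refine ⟨fun j k => w k * A j k, ?_, ?_⟩
  · intro i j
    have hwj := hwpos j
    refine ⟨?_, ?_, ?_⟩
    · constructor
      · intro h; exact mul_neg_of_pos_of_neg hwj h
      · intro h; by_contra hc; push_neg at hc
        exact absurd h (not_lt.2 (mul_nonneg hwj.le hc))
    · constructor
      · intro h; simp [h]
      · intro h; rcases mul_eq_zero.1 h with h' | h'
        · exact absurd h' (ne_of_gt hwj)
        · exact h'
    · constructor
      · intro h; exact mul_pos hwj h
      · intro h; by_contra hc; push_neg at hc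
        exact absurd h (not_lt.2 (mul_nonpos_of_nonneg_of_nonpos hwj.le hc))
  · funext j
    simp only [Matrix.mulVec, dotProduct, mul_one, Pi.zero_apply]
    have := hdiv j
    have h2 : (∑ k, w k * A j k) = -∑ k, w k * ((if src k = j then (1:ℝ) else 0) -
        (if tgt k = j then 1 else 0)) := by
      rw [← Finset.sum_neg_distrib]
      apply Finset.sum_congr rfl
      intro k _
      rw [hA j k]; ring
    rw [h2, this, neg_zero]
end

section
/- If a directed graph G is weakly reversible (every edge lies on a directed cycle), then there exists a vector v ∈ ℝ^r with all entries strictly positive such that A·v = 0, where A is the incidence matrix of G. -/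
/-- If every edge lies on a directed cycle, then there is a strictly
positive vector in the kernel of the incidence matrix. -/
theorem stmt_2 {V E : Type*} [Fintype V] [Fintype E] [DecidableEq V]
    (src tgt : E → V) (A : Matrix V E ℝ)
    (hA : ∀ j k, A j k = (if tgt k = j then (1 : ℝ) else 0) -
      (if src k = j then (1 : ℝ) else 0))
    (hwr : ∀ e : E, Relation.ReflTransGen
      (fun a b => ∃ e', src e' = a ∧ tgt e' = b) (tgt e) (src e)) :
    ∃ v : E → ℝ, (∀ k, 0 < v k) ∧ A.mulVec v = 0 := by
  classical
  -- For any path from a to b, there is a nonnegative vector whose image is e_b - e_a.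
  have key : ∀ a b : V, Relation.ReflTransGen
      (fun a b => ∃ e', src e' = a ∧ tgt e' = b) a b →
      ∃ w : E → ℝ, (∀ k, 0 ≤ w k) ∧
        A.mulVec w = fun j => (if b = j then (1:ℝ) else 0) - (if a = j then 1 else 0) := by
    intro a b h
    induction h with
    | refl =>
      refine ⟨0, fun k => le_rfl, ?_⟩
      funext j
      simp [Matrix.mulVec_zero]
    | @tail b c hab hbc ih =>
      obtain ⟨w, hw0, hw⟩ := ih
      obtain ⟨e', he1, he2⟩ := hbc
      refine ⟨w + (fun k => if k = e' then 1 else 0), ?_, ?_⟩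
      · intro k
        have : (0:ℝ) ≤ if k = e' then 1 else 0 := by positivity
        exact add_nonneg (hw0 k) this
      · funext j
        have hind : A.mulVec (fun k => if k = e' then (1:ℝ) else 0) j = A j e' := by
          simp [Matrix.mulVec, dotProduct]
        have := congrFun hw j
        rw [Matrix.mulVec_add, Pi.add_apply, this, hind, hA j e', he1, he2]
        ring
  choose w hw0 hw using fun e => key (tgt e) (src e) (hwr e)
  refine ⟨fun k => (∑ e, w e k) + 1, ?_, ?_⟩
  · intro k
    have hs : (0:ℝ) ≤ ∑ e, w e k := Finset.sum_nonneg fun e _ => hw0 e k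
    dsimp only
    linarith
  · have h1 : A.mulVec (fun k => (∑ e, w e k) + 1)
        = A.mulVec (fun k => ∑ e, w e k) + A.mulVec (fun _ => 1) := by
      rw [← Matrix.mulVec_add]
      rfl
    rw [h1]
    have h2 : (fun k => ∑ e, w e k) = ∑ e : E, w e := by
      funext k; simp
    have h3 : A.mulVec (fun k => ∑ e, w e k) = ∑ e : E, A.mulVec (w e) := by
      rw [h2]
      exact map_sum A.mulVecLin w Finset.univ
    rw [h3]
    funext j
    have h4 : A.mulVec (fun _ : E => (1:ℝ)) j = ∑ e : E, A j e := by
      simp [Matrix.mulVec, dotProduct]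
    simp only [Pi.add_apply, Finset.sum_apply, h4]
    have h5 : ∀ e : E, A.mulVec (w e) j + A j e = 0 := by
      intro e
      rw [congrFun (hw e) j, hA j e]
      ring
    have : (∑ e : E, A.mulVec (w e) j) + ∑ e : E, A j e
        = ∑ e : E, (A.mulVec (w e) j + A j e) := by
      rw [Finset.sum_add_distrib]
    rw [this]
    simp [h5]
end

section
/- Let (G,y) be a chemical reaction network with reaction graph G=(V,E,ρ,π) and stoichiometric map y: V → ℝ^m, and let (G̃,ỹ,ỹ') be a split network translation of (G,y) with slices indexed by l ∈ {1,…,q}, bijections α^{(l)}: E → Ẽ^{(l)}, and uniform source map β: E → Ṽ. Then for any rate constants κ ∈ ℝ_{>0}^{|E|} (assigning the rate constant of reaction k to each of its copies α^{(l)}(k)), the mass-action vector field of (G,y), namely x ↦ Σ_{k∈E} κ_k (y(π(k)) − y(ρ(k))) x^{y(ρ(k))}, equals the generalized mass-action vector field of (G̃,ỹ,ỹ'), namely x ↦ Σ_{k∈E} Σ_{l∈Q} κ_k (ỹ(π̃^{(l)}(α^{(l)}(k))) − ỹ(β(k))) x^{ỹ'(β(k))}, for all x ∈ ℝ_{>0}^m.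 -/
open Finset

/-- Dynamical equivalence of a mass-action system and the
generalized mass-action system of a split network translation. -/
theorem stmt_3 {V E Vt : Type*} [Fintype E] {m q : ℕ} {Et : Fin q → Type*}
    (ρ π : E → V) (y : V → Fin m → ℝ)
    (ρt πt : ∀ l : Fin q, Et l → Vt) (yt yt' : Vt → Fin m → ℝ)
    (α : ∀ l : Fin q, E ≃ Et l) (β : E → Vt)
    -- (a) uniform source map across slices
    (ha : ∀ (l : Fin q) (k : E), ρt l (α l k) = β k)
    -- (b) common sources are preserved
    (hb : ∀ k' k'' : E, ρ k' = ρ k'' → β k' = β k'')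
    -- (c) kinetic-order complexes are the original sources
    (hc : ∀ k : E, yt' (β k) = y (ρ k))
    -- (d) summed reaction vectors across slices equal the original ones
    (hd : ∀ k : E, ∑ l : Fin q, (yt (πt l (α l k)) - yt (β k)) = y (π k) - y (ρ k))
    (κ : E → ℝ) (hκ : ∀ k, 0 < κ k) :
    ∀ x : Fin m → ℝ, (∀ j, 0 < x j) →
      ∑ k : E, (κ k * ∏ j : Fin m, x j ^ (y (ρ k) j)) • (y (π k) - y (ρ k)) =
      ∑ k : E, ∑ l : Fin q,
        (κ k * ∏ j : Fin m, x j ^ (yt' (β k) j)) • (yt (πt l (α l k)) - yt (β k)) := by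
  intro x hx
  refine Finset.sum_congr rfl fun k _ => ?_
  rw [← Finset.smul_sum, hd k, hc k]
end

section
/- For the PFK-2/FBPase-2 mass-action system (six species, nine reactions with rate constants k₁,…,k₉ > 0 as specified), for every pair τ₁, τ₂ > 0 the point x₁ = (k₂(k₅+k₉) + k₄k₉τ₂)τ₁/(k₁(k₅+k₉)), x₂ = τ₁, x₃ = (k₂(k₅+k₉) + k₄k₈τ₂)τ₁/(k₃(k₅+k₉)), x₄ = τ₂, x₅ = k₁k₄(k₇+k₈)τ₂/(k₆(k₂(k₅+k₉) + k₄k₉τ₂)), x₆ = k₄τ₁τ₂/(k₅+k₉) is a positive steady state of the system. -/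
/-- Steady state condition for the PFK-2/FBPase-2 mass-action system. -/
def pfkSteady (k1 k2 k3 k4 k5 k6 k7 k8 k9 x1 x2 x3 x4 x5 x6 : ℝ) : Prop :=
  -k1 * x1 + k3 * x3 - k6 * x1 * x5 + (k7 + k9) * x6 = 0 ∧
  k1 * x1 - k2 * x2 - k4 * x2 * x4 + k5 * x6 = 0 ∧
  k2 * x2 - k3 * x3 + k8 * x6 = 0 ∧
  -k4 * x2 * x4 + (k5 + k9) * x6 = 0 ∧
  -k6 * x1 * x5 + (k7 + k8) * x6 = 0 ∧
  k4 * x2 * x4 + k6 * x1 * x5 - (k5 + k7 + k8 + k9) * x6 = 0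

/-- The full two-parameter family of positive steady states of the
PFK-2/FBPase-2 mass-action system. -/
theorem stmt_11 (k1 k2 k3 k4 k5 k6 k7 k8 k9 : ℝ)
    (h1 : 0 < k1) (h2 : 0 < k2) (h3 : 0 < k3) (h4 : 0 < k4) (h5 : 0 < k5)
    (h6 : 0 < k6) (h7 : 0 < k7) (h8 : 0 < k8) (h9 : 0 < k9) :
    ∀ τ1 τ2 : ℝ, 0 < τ1 → 0 < τ2 →
      (0 < (k2 * (k5 + k9) + k4 * k9 * τ2) * τ1 / (k1 * (k5 + k9)) ∧ 0 < τ1 ∧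
        0 < (k2 * (k5 + k9) + k4 * k8 * τ2) * τ1 / (k3 * (k5 + k9)) ∧ 0 < τ2 ∧
        0 < k1 * k4 * (k7 + k8) * τ2 / (k6 * (k2 * (k5 + k9) + k4 * k9 * τ2)) ∧
        0 < k4 * τ1 * τ2 / (k5 + k9)) ∧
      pfkSteady k1 k2 k3 k4 k5 k6 k7 k8 k9
        ((k2 * (k5 + k9) + k4 * k9 * τ2) * τ1 / (k1 * (k5 + k9)))
        τ1
        ((k2 * (k5 + k9) + k4 * k8 * τ2) * τ1 / (k3 * (k5 + k9)))
        τ2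
        (k1 * k4 * (k7 + k8) * τ2 / (k6 * (k2 * (k5 + k9) + k4 * k9 * τ2)))
        (k4 * τ1 * τ2 / (k5 + k9)) := by
  intro τ1 τ2 ht1 ht2
  have hA : 0 < k2 * (k5 + k9) + k4 * k9 * τ2 := by positivity
  have hB : 0 < k2 * (k5 + k9) + k4 * k8 * τ2 := by positivity
  have h59 : 0 < k5 + k9 := by positivity
  refine ⟨⟨by positivity, ht1, by positivity, ht2, by positivity, by positivity⟩, ?_, ?_, ?_, ?_, ?_, ?_⟩ <;>
    field_simp <;> ring
end
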